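/- Let D = (α,β)_ℚ be a quaternion division algebra. If -1 has a square root in D, then D is isomorphic as a ℚ-algebra to a quaternion algebra (γ,-1)_ℚ for some nonzero rational γ. -/

import Mathlib

open Quaternion in
/-- If `-1` has a square root in the quaternion division algebra `D = (α,β)_ℚ`, then
`D ≅ (γ,-1)_ℚ` for some nonzero rational `γ`. -/
theorem quaternion_iso_gamma_neg_one (α β : ℚ) (hα : α ≠ 0) (hβ : β ≠ 0)
    (hdiv : ∀ x : ℍ[ℚ, α, β], x ≠ 0 → IsUnit x)
    (hsq : ∃ y : ℍ[ℚ, α, β], y ^ 2 = -1) :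
    ∃ γ : ℚ, γ ≠ 0 ∧ Nonempty (ℍ[ℚ, α, β] ≃ₐ[ℚ] ℍ[ℚ, γ, -1]) := by
  obtain ⟨y, hy⟩ := hsq
  rw [sq] at hy
  -- basic component facts about y
  have h1 := congrArg QuaternionAlgebra.imI hy
  have h2 := congrArg QuaternionAlgebra.imJ hy
  have h3 := congrArg QuaternionAlgebra.imK hy
  have h0 := congrArg QuaternionAlgebra.re hy
  simp only [QuaternionAlgebra.re_mul, QuaternionAlgebra.imI_mul, QuaternionAlgebra.imJ_mul,
    QuaternionAlgebra.imK_mul, QuaternionAlgebra.re_neg, QuaternionAlgebra.imI_neg,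
    QuaternionAlgebra.imJ_neg, QuaternionAlgebra.imK_neg, QuaternionAlgebra.re_one,
    QuaternionAlgebra.imI_one, QuaternionAlgebra.imJ_one, QuaternionAlgebra.imK_one,
    neg_zero, zero_mul, mul_zero, add_zero, sub_zero] at h0 h1 h2 h3
  have hre : y.re = 0 := by
    by_contra h
    have hb : y.imI = 0 := by
      have : y.re * y.imI = 0 := by linarith
      exact (mul_eq_zero.mp this).resolve_left h
    have hc : y.imJ = 0 := by
      have : y.re * y.imJ = 0 := by linarith
      exact (mul_eq_zero.mp this).resolve_left h
    have hd : y.imK = 0 := by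
      have : y.re * y.imK = 0 := by linarith
      exact (mul_eq_zero.mp this).resolve_left h
    rw [hb, hc, hd] at h0
    nlinarith [mul_self_nonneg y.re]
  have hyne : y ≠ 0 := by
    intro h
    rw [h] at h0
    simp at h0
  -- find u not commuting with y
  have hexists : ∃ u : ℍ[ℚ, α, β], u * y - y * u ≠ 0 := by
    by_cases hcom : (⟨0,1,0,0⟩ : ℍ[ℚ, α, β]) * y = y * ⟨0,1,0,0⟩
    · refine ⟨⟨0,0,1,0⟩, fun h => hyne ?_⟩
      rw [sub_eq_zero] at h
      have k1 := congrArg QuaternionAlgebra.imJ hcom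
      have k2 := congrArg QuaternionAlgebra.imK hcom
      have k3 := congrArg QuaternionAlgebra.imK h
      simp only [QuaternionAlgebra.imJ_mul, QuaternionAlgebra.imK_mul, hre] at k1 k2 k3
      ring_nf at k1 k2 k3
      have hK : y.imK = 0 := by
        rcases mul_eq_zero.mp (show α * y.imK = 0 by linarith) with h' | h'
        · exact absurd h' hα
        · exact h'
      have hJ : y.imJ = 0 := by linarith
      have hI : y.imI = 0 := by linarith
      ext <;> simp [hre, hI, hJ, hK]
    · exact ⟨⟨0,1,0,0⟩, sub_ne_zero.mpr hcom⟩
  obtain ⟨u, hune⟩ := hexists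
  set z : ℍ[ℚ, α, β] := u * y - y * u with hzdef
  -- z is pure
  have hzre : z.re = 0 := by
    simp only [hzdef, QuaternionAlgebra.re_sub, QuaternionAlgebra.re_mul]
    ring
  -- z anticommutes with y
  have hanti : z * y + y * z = 0 := by
    have : z * y + y * z = u * (y * y) - (y * y) * u := by rw [hzdef]; noncomm_ring
    rw [this, hy]
    simp
  have hyz : y * z = -(z * y) := eq_neg_of_add_eq_zero_right hanti
  -- γ and z * z = γ • 1
  set γ : ℚ := α * z.imI ^ 2 + β * z.imJ ^ 2 - α * β * z.imK ^ 2 with hγdef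
  have hzz : z * z = γ • (1 : ℍ[ℚ, α, β]) := by
    ext <;> simp [QuaternionAlgebra.re_mul, QuaternionAlgebra.imI_mul, QuaternionAlgebra.imJ_mul,
      QuaternionAlgebra.imK_mul, hzre, hγdef] <;> ring
  have hzunit : IsUnit z := hdiv z hune
  have hγne : γ ≠ 0 := by
    intro h
    rw [h, zero_smul] at hzz
    exact hune (hzunit.mul_left_cancel (by rw [hzz, mul_zero]))
  refine ⟨γ, hγne, ?_⟩
  -- the quaternionic basis z, y, z*y
  have hnegone : y * y = (-1 : ℚ) • (1 : ℍ[ℚ, α, β]) := by rw [hy]; simp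
  let q : QuaternionAlgebra.Basis ℍ[ℚ, α, β] γ 0 (-1) :=
    { i := z, j := y, k := z * y
      i_mul_i := by rw [hzz, zero_smul, add_zero]
      j_mul_j := hnegone
      i_mul_j := rfl
      j_mul_i := by rw [hyz, zero_smul, zero_sub] }
  let f := q.liftHom
  -- injectivity
  have hinj : Function.Injective f := by
    rw [injective_iff_map_eq_zero]
    intro x hx
    have hwdef : f x = algebraMap ℚ _ x.re + x.imI • z + x.imJ • y + x.imK • (z * y) := rfl
    rw [hwdef] at hx
    -- conjugate by y
    have hyzy : y * z * y = z := by
      rw [hyz, neg_mul, mul_assoc, hy, mul_neg_one, neg_neg]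
    have hyzyy : y * (z * y) = z := by rw [← mul_assoc, hyzy]
    have h2' : (-x.re) • (1 : ℍ[ℚ, α, β]) + x.imI • z + (-x.imJ) • y + x.imK • (z * y) = 0 := by
      have : y * (algebraMap ℚ _ x.re + x.imI • z + x.imJ • y + x.imK • (z * y)) * y
          = (-x.re) • 1 + x.imI • z + (-x.imJ) • y + x.imK • (z * y) := by
        simp only [mul_add, add_mul, Algebra.mul_smul_comm, Algebra.smul_mul_assoc,
          Algebra.algebraMap_eq_smul_one, mul_one, one_mul]
        rw [hyzy, show y * (z * y) * y = z * y by rw [hyzyy],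
          show y * y * y = -y by rw [hy, neg_one_mul], hy]
        module
      rw [← this, hx, mul_zero, zero_mul]
    have hw' : x.re • (1 : ℍ[ℚ, α, β]) + x.imI • z + x.imJ • y + x.imK • (z * y) = 0 := by
      rw [← hx]; rw [Algebra.algebraMap_eq_smul_one]
    have hac : x.re • (1 : ℍ[ℚ, α, β]) + x.imJ • y = 0 := by
      have h := congrArg₂ (· - ·) hw' h2'
      simp only [sub_zero] at h
      have : (x.re • (1 : ℍ[ℚ, α, β]) + x.imI • z + x.imJ • y + x.imK • (z * y)) -
          ((-x.re) • (1 : ℍ[ℚ, α, β]) + x.imI • z + (-x.imJ) • y + x.imK • (z * y))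
          = (2 * x.re) • (1 : ℍ[ℚ, α, β]) + (2 * x.imJ) • y := by module
      rw [this] at h
      have h2 : (2:ℚ) • (x.re • (1 : ℍ[ℚ, α, β]) + x.imJ • y) =
          (2 * x.re) • (1 : ℍ[ℚ, α, β]) + (2 * x.imJ) • y := by module
      have := h2.trans h
      exact (smul_eq_zero.mp this).resolve_left (by norm_num)
    have hare : x.re = 0 := by
      have := congrArg QuaternionAlgebra.re hac
      simpa [hre] using this
    have haJ : x.imJ = 0 := by
      rw [hare, zero_smul, zero_add] at hac
      exact (smul_eq_zero.mp hac).resolve_right hyne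
    have hbd : x.imI • (1 : ℍ[ℚ, α, β]) + x.imK • y = 0 := by
      rw [hare, haJ] at hw'
      simp only [zero_smul, zero_add, add_zero] at hw'
      have hz' : z * (x.imI • (1 : ℍ[ℚ, α, β]) + x.imK • y) = x.imI • z + x.imK • (z * y) := by
        simp [mul_add, Algebra.mul_smul_comm]
      exact hzunit.mul_left_cancel (by rw [hz', hw', mul_zero])
    have haI : x.imI = 0 := by
      have := congrArg QuaternionAlgebra.re hbd
      simpa [hre] using this
    have haK : x.imK = 0 := by
      rw [haI, zero_smul, zero_add] at hbd
      exact (smul_eq_zero.mp hbd).resolve_right hyne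
    ext <;> simp [hare, haI, haJ, haK]
  -- surjectivity by dimension count
  have hfin : FiniteDimensional ℚ ℍ[ℚ, γ, (-1 : ℚ)] :=
    Module.Finite.of_basis (QuaternionAlgebra.basisOneIJK γ 0 (-1))
  have hsurj : Function.Surjective f := by
    have h := (LinearMap.injective_iff_surjective_of_finrank_eq_finrank
      (f := f.toLinearMap) (by
        rw [QuaternionAlgebra.finrank_eq_four, QuaternionAlgebra.finrank_eq_four]))
    exact h.mp hinj
  exact ⟨(AlgEquiv.ofBijective f ⟨hinj, hsurj⟩).symm⟩
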